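/- Let z ∈ I_*, y ∈ W, s ∈ S. Then: (i) X^z_y + X^z_{ys} = u²(X^{szs*}_y + X^{szs*}_{ys}) if sz ≠ zs* and sz < z; (ii) (u+1)(X^z_y + X^z_{ys}) = (u²−u)(X^{sz}_y + X^{sz}_{ys}) if sz = zs* and sz < z. -/

import Mathlib

open Polynomial
open scoped Classical

/-- The characterization (Proposition 1.2) of the polynomials `X^z_y ∈ ℤ[u]`, indexed by pairs
`(z, y)` with `z` a twisted involution (`st z = z⁻¹`) and `y ∈ W`: `X^z_1 = δ_{z,1}`, and for
`s ∈ S`, `y > ys`, the recursions 1.2(i)–(iv) hold. -/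
def XRec {B W : Type} [Group W] {M : CoxeterMatrix B} (cs : CoxeterSystem M W)
    (st : W ≃* W) (P : {z : W // st z = z⁻¹} → W → Polynomial ℤ) : Prop :=
  (∀ z : {z : W // st z = z⁻¹}, P z 1 = if z.1 = 1 then 1 else 0) ∧
  ∀ (i : B) (y : W), cs.length (y * cs.simple i) < cs.length y →
    ∀ z : {z : W // st z = z⁻¹},
      (cs.simple i * z.1 = z.1 * st (cs.simple i) →
        cs.length z.1 < cs.length (cs.simple i * z.1) →
        ∀ h : st (cs.simple i * z.1) = (cs.simple i * z.1)⁻¹,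
          P z y = X * P z (y * cs.simple i) +
            (X + 1) * P ⟨cs.simple i * z.1, h⟩ (y * cs.simple i)) ∧
      (cs.simple i * z.1 = z.1 * st (cs.simple i) →
        cs.length (cs.simple i * z.1) < cs.length z.1 →
        ∀ h : st (cs.simple i * z.1) = (cs.simple i * z.1)⁻¹,
          P z y = (X ^ 2 - X - 1) * P z (y * cs.simple i) +
            (X ^ 2 - X) * P ⟨cs.simple i * z.1, h⟩ (y * cs.simple i)) ∧
      (cs.simple i * z.1 ≠ z.1 * st (cs.simple i) →
        cs.length z.1 < cs.length (cs.simple i * z.1) →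
        ∀ h : st (cs.simple i * z.1 * st (cs.simple i)) =
            (cs.simple i * z.1 * st (cs.simple i))⁻¹,
          P z y = P ⟨cs.simple i * z.1 * st (cs.simple i), h⟩ (y * cs.simple i)) ∧
      (cs.simple i * z.1 ≠ z.1 * st (cs.simple i) →
        cs.length (cs.simple i * z.1) < cs.length z.1 →
        ∀ h : st (cs.simple i * z.1 * st (cs.simple i)) =
            (cs.simple i * z.1 * st (cs.simple i))⁻¹,
          P z y = (X ^ 2 - 1) * P z (y * cs.simple i) +
            X ^ 2 * P ⟨cs.simple i * z.1 * st (cs.simple i), h⟩ (y * cs.simple i))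


namespace Statement10Aux

open List

variable {B W : Type} [Group W] {M : CoxeterMatrix B} (cs : CoxeterSystem M W)

/-- The basic sign-flipping involution used to prove the exchange condition. -/
noncomputable def phiFun (i : B) : W × ℤˣ → W × ℤˣ :=
  fun p => (cs.simple i * p.1 * cs.simple i, if p.1 = cs.simple i then -p.2 else p.2)

lemma conj_simple_eq_simple_iff (i : B) (t : W) :
    cs.simple i * t * cs.simple i = cs.simple i ↔ t = cs.simple i := by
  constructor
  · intro h
    have := congrArg (fun x => cs.simple i * x * cs.simple i) h
    simpa [mul_assoc, cs.simple_mul_simple_self] using this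
  · rintro rfl
    simp [mul_assoc, cs.simple_mul_simple_self]

lemma phiFun_involutive (i : B) : Function.Involutive (phiFun cs i) := by
  rintro ⟨t, ε⟩
  have hconj : cs.simple i * (cs.simple i * t * cs.simple i) * cs.simple i = t := by
    simp [mul_assoc, cs.simple_mul_simple_self, ← mul_assoc]
  have h' : cs.simple i * t = 1 ↔ t = cs.simple i := by
    constructor
    · intro h1
      have := congrArg (cs.simple i * ·) h1
      simpa [← mul_assoc, cs.simple_mul_simple_self] using this
    · rintro rfl; exact cs.simple_mul_simple_self i
  by_cases h : t = cs.simple i <;>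
    simp [phiFun, conj_simple_eq_simple_iff, h, hconj, h']

/-- The sign-flipping involution as a permutation. -/
noncomputable def phi (i : B) : Equiv.Perm (W × ℤˣ) := (phiFun_involutive cs i).toPerm

lemma phi_apply (i : B) (p : W × ℤˣ) : phi cs i p = phiFun cs i p := rfl

lemma simple_mul_pow (i j : B) (n : ℤ) :
    cs.simple j * (cs.simple i * cs.simple j) ^ n
      = (cs.simple i * cs.simple j) ^ (-n) * cs.simple j := by
  have key : cs.simple j * (cs.simple i * cs.simple j) * (cs.simple j)⁻¹
      = (cs.simple i * cs.simple j)⁻¹ := by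
    rw [cs.inv_simple, mul_inv_rev, cs.inv_simple, cs.inv_simple]
    simp [mul_assoc, cs.simple_mul_simple_self]
  have := congrArg (· ^ n) key
  simp only [conj_zpow] at this
  rw [inv_zpow, ← zpow_neg] at this
  have h2 : cs.simple j * (cs.simple i * cs.simple j) ^ n * (cs.simple j)⁻¹
      = (cs.simple i * cs.simple j) ^ (-n) := this
  calc cs.simple j * (cs.simple i * cs.simple j) ^ n
      = (cs.simple j * (cs.simple i * cs.simple j) ^ n * (cs.simple j)⁻¹) * cs.simple j := by
        simp [mul_assoc]
    _ = (cs.simple i * cs.simple j) ^ (-n) * cs.simple j := by rw [h2]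



/-- General sign map for an element `a`. -/
noncomputable def psi (a : W) : W × ℤˣ → W × ℤˣ :=
  fun p => (a * p.1 * a, if p.1 = a then -p.2 else p.2)

lemma phi_eq_psi (i : B) (p : W × ℤˣ) : phi cs i p = psi (cs.simple i) p := rfl

lemma psi_comp_pow {a b : W} (ha : a * a = 1) (hb : b * b = 1) (k : ℕ) (t : W) (ε : ℤˣ) :
    (psi a ∘ psi b)^[k] (t, ε) =
      ((a * b) ^ (k : ℤ) * t * (a * b) ^ (-(k : ℤ)),
        ε * ∏ r ∈ Finset.range (2 * k),
          (if t = (a * b) ^ (-(r : ℤ)) * b then (-1 : ℤˣ) else 1)) := by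
  have hainv : a⁻¹ = a := inv_eq_of_mul_eq_one_right ha
  have hbinv : b⁻¹ = b := inv_eq_of_mul_eq_one_right hb
  have hPinv : (a * b)⁻¹ = b * a := by rw [mul_inv_rev, hainv, hbinv]
  have hcomm : ∀ n : ℤ, b * (a * b) ^ n = (a * b) ^ (-n) * b := by
    intro n
    have h1 : b * (a * b) * b⁻¹ = (a * b)⁻¹ := by
      rw [hPinv, hbinv]
      calc b * (a * b) * b = b * a * (b * b) := by group
        _ = b * a := by rw [hb, mul_one]
    have h2 := congrArg (· ^ n) h1
    simp only [conj_zpow, inv_zpow, ← zpow_neg] at h2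
    calc b * (a * b) ^ n = b * (a * b) ^ n * b⁻¹ * b := by group
      _ = (a * b) ^ (-n) * b := by rw [h2]
  have hred : ∀ m n : ℤ, (a * b) ^ m * ((a * b) ^ n * b) * (a * b) ^ (-m)
      = (a * b) ^ (2 * m + n) * b := by
    intro m n
    rw [mul_assoc ((a * b) ^ m), mul_assoc ((a * b) ^ n), hcomm, ← mul_assoc, ← mul_assoc,
      ← zpow_add, ← zpow_add]
    ring_nf
  have hbab : b * a * b = (a * b) ^ (-1 : ℤ) * b := by
    rw [zpow_neg_one, hPinv]
  have hu : ∀ u : W, b * (b * u * b) * b = u := by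
    intro u
    calc b * (b * u * b) * b = (b * b) * u * (b * b) := by group
      _ = u := by rw [hb]; group
  induction k generalizing t ε with
  | zero => simp
  | succ k ih =>
    rw [Function.iterate_succ_apply', ih]
    have hC1 : ((a * b) ^ (k : ℤ) * t * (a * b) ^ (-(k : ℤ)) = b)
        ↔ t = (a * b) ^ (-(2 * k : ℤ)) * b := by
      constructor
      · intro h
        have h2 : t = (a * b) ^ (-(k : ℤ)) * ((a * b) ^ (k : ℤ) * t * (a * b) ^ (-(k : ℤ)))
            * (a * b) ^ (k : ℤ) := by group
        rw [h, mul_assoc, hcomm, ← mul_assoc, ← zpow_add] at h2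
        rw [show (-(2 * (k : ℕ) : ℤ)) = -(k : ℤ) + -(k : ℤ) by ring]
        exact h2
      · rintro rfl
        rw [hred, show (2 * (k : ℤ) + -(2 * (k : ℕ) : ℤ)) = 0 by push_cast; ring, zpow_zero,
          one_mul]
    have hC2 : (b * ((a * b) ^ (k : ℤ) * t * (a * b) ^ (-(k : ℤ))) * b = a)
        ↔ t = (a * b) ^ (-(2 * k + 1 : ℤ)) * b := by
      have hconj : ∀ u : W, (b * u * b = a) ↔ u = b * a * b := by
        intro u
        constructor
        · intro h
          have h3 : b * (b * u * b) * b = b * a * b := by rw [h]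
          rw [hu u] at h3
          exact h3
        · rintro rfl
          rw [hu]
      rw [hconj, hbab]
      constructor
      · intro h
        have h2 : t = (a * b) ^ (-(k : ℤ)) * ((a * b) ^ (k : ℤ) * t * (a * b) ^ (-(k : ℤ)))
            * (a * b) ^ (k : ℤ) := by group
        rw [h] at h2
        have hred' := hred (-(k : ℤ)) (-1)
        rw [neg_neg] at hred'
        rw [hred'] at h2
        rw [show (-(2 * (k : ℕ) + 1 : ℤ)) = 2 * -(k : ℤ) + -1 by push_cast; ring]
        exact h2
      · rintro rfl
        rw [hred, show (2 * (k : ℤ) + -(2 * (k : ℕ) + 1 : ℤ)) = -1 by push_cast; ring]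
    simp only [Function.comp_apply, psi, hC1, hC2]
    have hfirst : a * (b * ((a * b) ^ (k : ℤ) * t * (a * b) ^ (-(k : ℤ))) * b) * a
        = (a * b) ^ ((k + 1 : ℕ) : ℤ) * t * (a * b) ^ (-((k + 1 : ℕ) : ℤ)) := by
      have hx : ∀ C : W, a * (b * C * b) * a = (a * b) * C * (a * b)⁻¹ := by
        intro C
        rw [hPinv]
        group
      rw [hx, show ((k + 1 : ℕ) : ℤ) = (k : ℤ) + 1 by push_cast; ring]
      set P := a * b with hP
      group
    rw [Prod.mk.injEq]
    refine ⟨hfirst, ?_⟩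
    rw [show 2 * (k + 1) = 2 * k + 1 + 1 by ring, Finset.prod_range_succ, Finset.prod_range_succ]
    rw [show (-((2 * k : ℕ) : ℤ)) = -(2 * k : ℤ) by push_cast; ring,
      show (-((2 * k + 1 : ℕ) : ℤ)) = -(2 * k + 1 : ℤ) by push_cast; ring]
    by_cases h1 : t = (a * b) ^ (-(2 * (k : ℤ))) * b <;>
      by_cases h2 : t = (a * b) ^ (-(2 * (k : ℤ) + 1)) * b <;>
        simp [h1, h2, mul_neg, neg_mul, neg_neg, mul_assoc]


lemma phi_pow_apply (i j : B) (k : ℕ) (p : W × ℤˣ) :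
    ((phi cs i * phi cs j) ^ k) p = (psi (cs.simple i) ∘ psi (cs.simple j))^[k] p := by
  induction k generalizing p with
  | zero => simp
  | succ k ih =>
    rw [pow_succ', Equiv.Perm.mul_apply, ih, Function.iterate_succ_apply',
      Equiv.Perm.mul_apply, phi_eq_psi, phi_eq_psi]
    rfl

lemma phi_liftable : M.IsLiftable (fun i => phi cs i) := by
  intro i j
  apply Equiv.ext
  rintro ⟨t, ε⟩
  rw [Equiv.Perm.one_apply, phi_pow_apply,
    psi_comp_pow (cs.simple_mul_simple_self i) (cs.simple_mul_simple_self j)]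
  have hone : (cs.simple i * cs.simple j) ^ ((M i j : ℕ) : ℤ) = 1 := by
    rw [zpow_natCast]
    exact cs.simple_mul_simple_pow i j
  rw [Prod.mk.injEq]
  constructor
  · rw [hone, zpow_neg, hone, inv_one, one_mul, mul_one]
  · have hper : ∀ r : ℕ,
        ((cs.simple i * cs.simple j) : W) ^ (-((M i j + r : ℕ) : ℤ))
          = (cs.simple i * cs.simple j) ^ (-(r : ℤ)) := by
      intro r
      push_cast
      rw [neg_add, zpow_add, zpow_neg, hone, inv_one, one_mul]
    rw [two_mul, Finset.prod_range_add]
    have hsecond : ∀ r ∈ Finset.range (M i j),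
        (if t = (cs.simple i * cs.simple j) ^ (-((M i j + r : ℕ) : ℤ)) * cs.simple j
          then (-1 : ℤˣ) else 1)
        = (if t = (cs.simple i * cs.simple j) ^ (-(r : ℤ)) * cs.simple j
          then (-1 : ℤˣ) else 1) := by
      intro r _
      rw [hper]
    rw [Finset.prod_congr rfl hsecond, ← Finset.prod_mul_distrib]
    have : ∀ r ∈ Finset.range (M i j),
        (if t = (cs.simple i * cs.simple j) ^ (-(r : ℤ)) * cs.simple j
          then (-1 : ℤˣ) else 1)
        * (if t = (cs.simple i * cs.simple j) ^ (-(r : ℤ)) * cs.simple j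
          then (-1 : ℤˣ) else 1) = 1 := fun r _ => Int.units_mul_self _
    rw [Finset.prod_congr rfl this, Finset.prod_const_one, mul_one]


/-- The sign homomorphism used to prove the exchange condition. -/
noncomputable def mu : W →* Equiv.Perm (W × ℤˣ) :=
  cs.lift ⟨fun i => phi cs i, phi_liftable cs⟩

lemma mu_simple (i : B) : mu cs (cs.simple i) = phi cs i :=
  cs.lift_apply_simple (phi_liftable cs) i

lemma mu_wordProd_inv (ω : List B) (t : W) (ε : ℤˣ) :
    mu cs (cs.wordProd ω)⁻¹ (t, ε) =
      ((cs.wordProd ω)⁻¹ * t * cs.wordProd ω,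
        (-1 : ℤˣ) ^ ((cs.leftInvSeq ω).count t) * ε) := by
  induction ω generalizing t ε with
  | nil => simp
  | cons i ω ih =>
    have hw : (cs.wordProd (i :: ω))⁻¹ = (cs.wordProd ω)⁻¹ * cs.simple i := by
      rw [cs.wordProd_cons, mul_inv_rev, cs.inv_simple]
    rw [hw, map_mul, Equiv.Perm.mul_apply, mu_simple, phi_eq_psi]
    show mu cs (cs.wordProd ω)⁻¹
      (cs.simple i * t * cs.simple i, if t = cs.simple i then -ε else ε) = _
    rw [ih]
    have hcount : (cs.leftInvSeq (i :: ω)).count t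
        = (if t = cs.simple i then 1 else 0)
          + (cs.leftInvSeq ω).count (cs.simple i * t * cs.simple i) := by
      show ((cs.simple i) :: List.map (⇑(MulAut.conj (cs.simple i))) (cs.leftInvSeq ω)).count t
        = _
      rw [List.count_cons]
      have hinj : Function.Injective (⇑(MulAut.conj (cs.simple i))) :=
        (MulAut.conj (cs.simple i)).injective
      have hmap : (List.map (⇑(MulAut.conj (cs.simple i))) (cs.leftInvSeq ω)).count t
          = (cs.leftInvSeq ω).count (cs.simple i * t * cs.simple i) := by
        have ht : t = (MulAut.conj (cs.simple i)) (cs.simple i * t * cs.simple i) := by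
          simp [MulAut.conj_apply, mul_assoc, cs.simple_mul_simple_self, ← mul_assoc]
        conv_lhs => rw [ht]
        rw [List.count_map_of_injective _ _ hinj]
      rw [hmap]
      by_cases h : t = cs.simple i
      · simp [h, add_comm]
      · have hne : ¬(cs.simple i == t) = true := by
          simp only [beq_iff_eq]
          exact fun hh => h hh.symm
        simp [h, hne, add_comm]
    rw [hcount]
    rw [Prod.mk.injEq]
    constructor
    · rw [cs.wordProd_cons]
      group
    · by_cases h : t = cs.simple i <;> simp [h, pow_add, mul_assoc]

lemma mem_leftInvSeq_of_descent {w : W} {i : B}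
    (h : cs.length (cs.simple i * w) < cs.length w) {ω : List B}
    (hred : cs.IsReduced ω) (hw : w = cs.wordProd ω) : cs.simple i ∈ cs.leftInvSeq ω := by
  obtain ⟨γ, hγlen, hγ⟩ := cs.exists_reduced_word (cs.simple i * w)
  have hπ : cs.wordProd (i :: γ) = w := by
    rw [cs.wordProd_cons, ← hγ, cs.simple_mul_simple_cancel_left]
  have hlen : (i :: γ).length = cs.length w := by
    have h1 : cs.length w ≤ (i :: γ).length := hπ ▸ cs.length_wordProd_le (i :: γ)
    have h2 : (i :: γ).length = cs.length (cs.simple i * w) + 1 := by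
      rw [hγ, show cs.length (cs.wordProd γ) = γ.length from hγlen]; simp
    omega
  have hred' : cs.IsReduced (i :: γ) := by
    rw [CoxeterSystem.IsReduced, hπ, hlen]
  have hmem : cs.simple i ∈ cs.leftInvSeq (i :: γ) := by
    show cs.simple i ∈ (cs.simple i) :: List.map (⇑(MulAut.conj (cs.simple i))) (cs.leftInvSeq γ)
    exact List.mem_cons_self
  have hcount1 : (cs.leftInvSeq (i :: γ)).count (cs.simple i) = 1 :=
    List.count_eq_one_of_mem hred'.nodup_leftInvSeq hmem
  -- compare the two sign computations
  have hkey := mu_wordProd_inv cs ω (cs.simple i) 1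
  have hkey' := mu_wordProd_inv cs (i :: γ) (cs.simple i) 1
  rw [hπ] at hkey'
  rw [← hw] at hkey
  rw [hkey'] at hkey
  have hsign := congrArg Prod.snd hkey
  simp only [hcount1, pow_one] at hsign
  -- hsign : -1 * 1 = (-1) ^ count * 1
  have hodd : Odd ((cs.leftInvSeq ω).count (cs.simple i)) := by
    rcases Nat.even_or_odd ((cs.leftInvSeq ω).count (cs.simple i)) with he | ho
    · exfalso
      rw [he.neg_one_pow] at hsign
      simp at hsign
    · exact ho
  have hpos : 0 < (cs.leftInvSeq ω).count (cs.simple i) := hodd.pos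
  exact List.count_pos_iff.mp hpos

lemma exists_eraseIdx_of_descent {w : W} {i : B}
    (h : cs.length (cs.simple i * w) < cs.length w) {ω : List B}
    (hred : cs.IsReduced ω) (hw : w = cs.wordProd ω) :
    ∃ k < ω.length, cs.simple i * w = cs.wordProd (ω.eraseIdx k) := by
  have hm := mem_leftInvSeq_of_descent cs h hred hw
  obtain ⟨k, hk, hks⟩ := List.mem_iff_getElem.mp hm
  refine ⟨k, by simpa using hk, ?_⟩
  have := cs.getD_leftInvSeq_mul_wordProd ω k
  rw [List.getD_eq_getElem _ 1 hk, hks] at this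
  rw [hw, this]

/-- The key "lifting" lemma: if `ℓ(s i * w) < ℓ w`, `ℓ(w * s j) < ℓ w` and
`ℓ(s i * w * s j) = ℓ w`, then `s i * w = w * s j`. -/
lemma tits {w : W} {i j : B}
    (h1 : cs.length (cs.simple i * w) < cs.length w)
    (h2 : cs.length (w * cs.simple j) < cs.length w)
    (h3 : cs.length (cs.simple i * w * cs.simple j) = cs.length w) :
    cs.simple i * w = w * cs.simple j := by
  obtain ⟨γ, hγlen, hγ⟩ := cs.exists_reduced_word (w * cs.simple j)
  have hπ : cs.wordProd (γ ++ [j]) = w := by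
    rw [cs.wordProd_append, cs.wordProd_singleton, ← hγ, cs.simple_mul_simple_cancel_right]
  have hlen : (γ ++ [j]).length = cs.length w := by
    have ha : cs.length w ≤ (γ ++ [j]).length := hπ ▸ cs.length_wordProd_le (γ ++ [j])
    have hb : (γ ++ [j]).length = cs.length (w * cs.simple j) + 1 := by
      rw [hγ, show cs.length (cs.wordProd γ) = γ.length from hγlen]; simp
    omega
  have hred : cs.IsReduced (γ ++ [j]) := by
    rw [CoxeterSystem.IsReduced, hπ, hlen]
  obtain ⟨k, hk, hke⟩ := exists_eraseIdx_of_descent cs h1 hred hπ.symm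
  rcases lt_or_ge k γ.length with hkγ | hkγ
  · exfalso
    rw [List.eraseIdx_append_of_lt_length hkγ] at hke
    have hzz : cs.simple i * w * cs.simple j = cs.wordProd (γ.eraseIdx k) := by
      rw [hke, cs.wordProd_append, cs.wordProd_singleton,
        cs.simple_mul_simple_cancel_right]
    have hlenz : cs.length (cs.simple i * w * cs.simple j) ≤ (γ.eraseIdx k).length := by
      rw [hzz]; exact cs.length_wordProd_le _
    have h5 : (γ.eraseIdx k).length + 1 = γ.length := List.length_eraseIdx_add_one hkγ
    have h6 : (γ ++ [j]).length = γ.length + 1 := by simp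
    omega
  · have hkeq : k = γ.length := by
      have : k < (γ ++ [j]).length := hk
      simp only [List.length_append, List.length_singleton] at this
      omega
    rw [List.eraseIdx_append_of_length_le (le_of_eq hkeq.symm), hkeq] at hke
    simp only [Nat.sub_self, List.eraseIdx_zero, List.tail_cons, List.append_nil] at hke
    rw [hke, hγ]


section St

variable (st : W ≃* W)

lemma st_wordProd (σ : B → B) (hσ : ∀ i, st (cs.simple i) = cs.simple (σ i)) (ω : List B) :
    st (cs.wordProd ω) = cs.wordProd (ω.map σ) := by
  induction ω with
  | nil => simp
  | cons i ω ih =>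
    rw [cs.wordProd_cons, map_mul, ih, hσ, List.map_cons, cs.wordProd_cons]

lemma length_st_le (hst_S : ∀ i : B, ∃ j : B, st (cs.simple i) = cs.simple j) (w : W) :
    cs.length (st w) ≤ cs.length w := by
  obtain ⟨ω, hωlen, hω⟩ := cs.exists_reduced_word w
  have h1 : st w = cs.wordProd (ω.map fun i => (hst_S i).choose) := by
    rw [hω, st_wordProd cs st (fun i => (hst_S i).choose) (fun i => (hst_S i).choose_spec)]
  rw [h1]
  calc cs.length (cs.wordProd (ω.map fun i => (hst_S i).choose))
      ≤ (ω.map fun i => (hst_S i).choose).length := cs.length_wordProd_le _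
    _ = ω.length := by simp
    _ = cs.length w := by rw [hω]; exact hωlen.symm

lemma length_st (hst_inv : ∀ w, st (st w) = w)
    (hst_S : ∀ i : B, ∃ j : B, st (cs.simple i) = cs.simple j) (w : W) :
    cs.length (st w) = cs.length w := by
  refine le_antisymm (length_st_le cs st hst_S w) ?_
  have := length_st_le cs st hst_S (st w)
  rwa [hst_inv] at this

lemma length_mul_st_simple (hst_inv : ∀ w, st (st w) = w)
    (hst_S : ∀ i : B, ∃ j : B, st (cs.simple i) = cs.simple j) {z : W} (hz : st z = z⁻¹) (i : B) :
    cs.length (z * st (cs.simple i)) = cs.length (cs.simple i * z) := by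
  obtain ⟨j, hj⟩ := hst_S i
  rw [hj]
  calc cs.length (z * cs.simple j) = cs.length ((z * cs.simple j)⁻¹) :=
        (cs.length_inv _).symm
    _ = cs.length (cs.simple j * z⁻¹) := by rw [mul_inv_rev, cs.inv_simple]
    _ = cs.length (st (cs.simple i) * st z) := by rw [hj, hz]
    _ = cs.length (st (cs.simple i * z)) := by rw [map_mul]
    _ = cs.length (cs.simple i * z) := length_st cs st hst_inv hst_S _

/-- The crucial length inequality in case 1.2(iii)/(iv). -/
lemma crossLength (hst_inv : ∀ w, st (st w) = w)
    (hst_S : ∀ i : B, ∃ j : B, st (cs.simple i) = cs.simple j) {z : W} (hz : st z = z⁻¹) {i : B}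
    (hne : cs.simple i * z ≠ z * st (cs.simple i))
    (hlt : cs.length (cs.simple i * z) < cs.length z) :
    cs.length (cs.simple i * z * st (cs.simple i)) < cs.length (z * st (cs.simple i)) := by
  obtain ⟨j, hj⟩ := hst_S i
  rw [hj] at hne ⊢
  have hA : cs.length (z * cs.simple j) = cs.length (cs.simple i * z) := by
    have := length_mul_st_simple cs st hst_inv hst_S (hz := hz) i
    rwa [hj] at this
  have hd1 := cs.length_simple_mul z i
  have hone : cs.length (cs.simple i * z) + 1 = cs.length z := by omega
  by_contra hcon
  push_neg at hcon
  have hd2 := cs.length_mul_simple (cs.simple i * z) j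
  have h3 : cs.length (cs.simple i * z * cs.simple j) = cs.length z := by omega
  -- apply tits to w := s i * z * s j
  have hw1 : cs.simple i * (cs.simple i * z * cs.simple j) = z * cs.simple j := by
    rw [← mul_assoc, ← mul_assoc, cs.simple_mul_simple_self, one_mul]
  have hw2 : (cs.simple i * z * cs.simple j) * cs.simple j = cs.simple i * z := by
    rw [cs.simple_mul_simple_cancel_right]
  have hw3 : cs.simple i * (cs.simple i * z * cs.simple j) * cs.simple j = z := by
    rw [hw1, cs.simple_mul_simple_cancel_right]
  have ht := tits cs (w := cs.simple i * z * cs.simple j) (i := i) (j := j)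
    (by rw [hw1, hA, h3]; omega)
    (by rw [hw2, h3]; omega)
    (by rw [hw3, h3])
  rw [hw1, hw2] at ht
  exact hne ht.symm

end St


section Core

variable (st : W ≃* W)

lemma coreI (hst_inv : ∀ w, st (st w) = w)
    (hst_S : ∀ i : B, ∃ j : B, st (cs.simple i) = cs.simple j)
    (P : {z : W // st z = z⁻¹} → W → Polynomial ℤ) (hP : XRec cs st P)
    (z : {z : W // st z = z⁻¹}) (i : B) (y : W)
    (hy : cs.length (y * cs.simple i) < cs.length y)
    (hne : cs.simple i * z.1 ≠ z.1 * st (cs.simple i))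
    (hlt : cs.length (cs.simple i * z.1) < cs.length z.1)
    (h : st (cs.simple i * z.1 * st (cs.simple i)) = (cs.simple i * z.1 * st (cs.simple i))⁻¹) :
    P z y + P z (y * cs.simple i) =
      X ^ 2 * (P ⟨cs.simple i * z.1 * st (cs.simple i), h⟩ y +
        P ⟨cs.simple i * z.1 * st (cs.simple i), h⟩ (y * cs.simple i)) := by
  have hss : st (cs.simple i) * st (cs.simple i) = 1 := by
    rw [← map_mul, cs.simple_mul_simple_self, map_one]
  have E1 := (hP.2 i y hy z).2.2.2 hne hlt h
  have hsz' : cs.simple i * (⟨cs.simple i * z.1 * st (cs.simple i), h⟩ :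
      {z : W // st z = z⁻¹}).1 = z.1 * st (cs.simple i) := by
    show cs.simple i * (cs.simple i * z.1 * st (cs.simple i)) = z.1 * st (cs.simple i)
    rw [show cs.simple i * z.1 * st (cs.simple i)
        = cs.simple i * (z.1 * st (cs.simple i)) from by rw [mul_assoc],
      cs.simple_mul_simple_cancel_left]
  have hz's : (⟨cs.simple i * z.1 * st (cs.simple i), h⟩ :
      {z : W // st z = z⁻¹}).1 * st (cs.simple i) = cs.simple i * z.1 := by
    show cs.simple i * z.1 * st (cs.simple i) * st (cs.simple i) = cs.simple i * z.1
    rw [mul_assoc, mul_assoc, hss, mul_one]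
  have hne' : cs.simple i * (⟨cs.simple i * z.1 * st (cs.simple i), h⟩ :
      {z : W // st z = z⁻¹}).1 ≠ (⟨cs.simple i * z.1 * st (cs.simple i), h⟩ :
      {z : W // st z = z⁻¹}).1 * st (cs.simple i) := by
    rw [hsz', hz's]
    exact fun hh => hne hh.symm
  have hlt' : cs.length (⟨cs.simple i * z.1 * st (cs.simple i), h⟩ :
      {z : W // st z = z⁻¹}).1 < cs.length (cs.simple i * (⟨cs.simple i * z.1 * st (cs.simple i),
      h⟩ : {z : W // st z = z⁻¹}).1) := by
    rw [hsz']
    exact crossLength cs st hst_inv hst_S z.2 hne hlt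
  have hback : cs.simple i * (⟨cs.simple i * z.1 * st (cs.simple i), h⟩ :
      {z : W // st z = z⁻¹}).1 * st (cs.simple i) = z.1 := by
    rw [hsz', mul_assoc, hss, mul_one]
  have h'' : st (cs.simple i * (⟨cs.simple i * z.1 * st (cs.simple i), h⟩ :
      {z : W // st z = z⁻¹}).1 * st (cs.simple i)) = (cs.simple i *
      (⟨cs.simple i * z.1 * st (cs.simple i), h⟩ : {z : W // st z = z⁻¹}).1 *
      st (cs.simple i))⁻¹ := by
    rw [hback]
    exact z.2
  have E2 := (hP.2 i y hy ⟨cs.simple i * z.1 * st (cs.simple i), h⟩).2.2.1 hne' hlt' h''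
  have PX : P ⟨cs.simple i * (⟨cs.simple i * z.1 * st (cs.simple i), h⟩ :
      {z : W // st z = z⁻¹}).1 * st (cs.simple i), h''⟩ = P z :=
    congrArg P (Subtype.ext hback)
  have E2' := E2.trans (congrFun PX (y * cs.simple i))
  rw [E1, E2']
  ring

lemma coreII (P : {z : W // st z = z⁻¹} → W → Polynomial ℤ) (hP : XRec cs st P)
    (z : {z : W // st z = z⁻¹}) (i : B) (y : W)
    (hy : cs.length (y * cs.simple i) < cs.length y)
    (heq : cs.simple i * z.1 = z.1 * st (cs.simple i))
    (hlt : cs.length (cs.simple i * z.1) < cs.length z.1)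
    (h : st (cs.simple i * z.1) = (cs.simple i * z.1)⁻¹) :
    (X + 1) * (P z y + P z (y * cs.simple i)) =
      (X ^ 2 - X) * (P ⟨cs.simple i * z.1, h⟩ y + P ⟨cs.simple i * z.1, h⟩ (y * cs.simple i)) := by
  have E1 := (hP.2 i y hy z).2.1 heq hlt h
  have hback : cs.simple i * (⟨cs.simple i * z.1, h⟩ : {z : W // st z = z⁻¹}).1 = z.1 := by
    show cs.simple i * (cs.simple i * z.1) = z.1
    rw [cs.simple_mul_simple_cancel_left]
  have hc1 : cs.simple i * (⟨cs.simple i * z.1, h⟩ : {z : W // st z = z⁻¹}).1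
      = (⟨cs.simple i * z.1, h⟩ : {z : W // st z = z⁻¹}).1 * st (cs.simple i) := by
    show cs.simple i * (cs.simple i * z.1) = cs.simple i * z.1 * st (cs.simple i)
    have hss : st (cs.simple i) * st (cs.simple i) = 1 := by
      rw [← map_mul, cs.simple_mul_simple_self, map_one]
    rw [cs.simple_mul_simple_cancel_left, heq, mul_assoc, hss, mul_one]
  have hc2 : cs.length (⟨cs.simple i * z.1, h⟩ : {z : W // st z = z⁻¹}).1
      < cs.length (cs.simple i * (⟨cs.simple i * z.1, h⟩ : {z : W // st z = z⁻¹}).1) := by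
    show cs.length (cs.simple i * z.1) < cs.length (cs.simple i * (cs.simple i * z.1))
    rw [cs.simple_mul_simple_cancel_left]
    exact hlt
  have h'' : st (cs.simple i * (⟨cs.simple i * z.1, h⟩ : {z : W // st z = z⁻¹}).1)
      = (cs.simple i * (⟨cs.simple i * z.1, h⟩ : {z : W // st z = z⁻¹}).1)⁻¹ := by
    rw [hback]
    exact z.2
  have E2 := (hP.2 i y hy ⟨cs.simple i * z.1, h⟩).1 hc1 hc2 h''
  have PX : P ⟨cs.simple i * (⟨cs.simple i * z.1, h⟩ : {z : W // st z = z⁻¹}).1, h''⟩ = P z :=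
    congrArg P (Subtype.ext hback)
  have E2' := E2.trans (congrArg (fun q => X * P ⟨cs.simple i * z.1, h⟩ (y * cs.simple i)
    + (X + 1) * q) (congrFun PX (y * cs.simple i)))
  rw [E1, E2']
  ring

end Core

end Statement10Aux

/-- **Corollary 1.5.** Let `z ∈ I_*`, `y ∈ W`, `s ∈ S`.  Then:
(i) `X^z_y + X^z_{ys} = u²(X^{szs*}_y + X^{szs*}_{ys})` if `sz ≠ zs*` and `sz < z`;
(ii) `(u+1)(X^z_y + X^z_{ys}) = (u²−u)(X^{sz}_y + X^{sz}_{ys})` if `sz = zs*` and `sz < z`. -/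
theorem statement10 {B W : Type} [Group W] [Finite B] {M : CoxeterMatrix B}
    (cs : CoxeterSystem M W) (st : W ≃* W)
    (hst_inv : ∀ w, st (st w) = w)
    (hst_S : ∀ i : B, ∃ j : B, st (cs.simple i) = cs.simple j)
    (P : {z : W // st z = z⁻¹} → W → Polynomial ℤ) (hP : XRec cs st P)
    (z : {z : W // st z = z⁻¹}) (y : W) (i : B) :
    (cs.simple i * z.1 ≠ z.1 * st (cs.simple i) →
      cs.length (cs.simple i * z.1) < cs.length z.1 →
      ∀ h : st (cs.simple i * z.1 * st (cs.simple i)) =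
          (cs.simple i * z.1 * st (cs.simple i))⁻¹,
        P z y + P z (y * cs.simple i) =
          X ^ 2 * (P ⟨cs.simple i * z.1 * st (cs.simple i), h⟩ y +
            P ⟨cs.simple i * z.1 * st (cs.simple i), h⟩ (y * cs.simple i))) ∧
    (cs.simple i * z.1 = z.1 * st (cs.simple i) →
      cs.length (cs.simple i * z.1) < cs.length z.1 →
      ∀ h : st (cs.simple i * z.1) = (cs.simple i * z.1)⁻¹,
        (X + 1) * (P z y + P z (y * cs.simple i)) =
          (X ^ 2 - X) * (P ⟨cs.simple i * z.1, h⟩ y +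
            P ⟨cs.simple i * z.1, h⟩ (y * cs.simple i))) := by
  constructor
  · intro hne hlt h
    rcases Nat.lt_or_ge (cs.length (y * cs.simple i)) (cs.length y) with hy | hy
    · exact Statement10Aux.coreI cs st hst_inv hst_S P hP z i y hy hne hlt h
    · have hy' : cs.length (y * cs.simple i * cs.simple i) < cs.length (y * cs.simple i) := by
        rw [cs.simple_mul_simple_cancel_right]
        have := cs.length_mul_simple_ne y i
        omega
      have := Statement10Aux.coreI cs st hst_inv hst_S P hP z i (y * cs.simple i) hy' hne hlt h
      rw [cs.simple_mul_simple_cancel_right] at this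
      linear_combination this
  · intro heq hlt h
    rcases Nat.lt_or_ge (cs.length (y * cs.simple i)) (cs.length y) with hy | hy
    · exact Statement10Aux.coreII cs st P hP z i y hy heq hlt h
    · have hy' : cs.length (y * cs.simple i * cs.simple i) < cs.length (y * cs.simple i) := by
        rw [cs.simple_mul_simple_cancel_right]
        have := cs.length_mul_simple_ne y i
        omega
      have := Statement10Aux.coreII cs st P hP z i (y * cs.simple i) hy' heq hlt h
      rw [cs.simple_mul_simple_cancel_right] at this
      linear_combination this
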